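/- Two graph homomorphisms f, g : G → H are ×-homotopic if and only if f and g lie in the same connected component of the poset Hom(G,H) (i.e., they are connected by a zigzag of comparabilities in the poset). -/

import Mathlib

/-- A graph: a symmetric relation on a vertex set, loops allowed. -/
structure SymGraph (V : Type) : Type where
  Adj : V → V → Prop
  symm : ∀ u v : V, Adj u v → Adj v u

/-- A graph homomorphism: a vertex map preserving adjacency. -/
def SymGraph.IsHom {V W : Type} (G : SymGraph V) (H : SymGraph W) (f : V → W) : Prop :=
  ∀ u v : V, G.Adj u v → H.Adj (f u) (f v)

/-- The categorical product of graphs. -/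
def SymGraph.prod {V W : Type} (G : SymGraph V) (H : SymGraph W) : SymGraph (V × W) :=
  ⟨fun p q => G.Adj p.1 q.1 ∧ H.Adj p.2 q.2,
   fun p q h => ⟨G.symm _ _ h.1, H.symm _ _ h.2⟩⟩

/-- The categorical exponential graph `H^G`: vertices are all functions `V(G) → V(H)`. -/
def SymGraph.exp {V W : Type} (G : SymGraph V) (H : SymGraph W) : SymGraph (V → W) :=
  ⟨fun f f' => ∀ v v' : V, G.Adj v v' → H.Adj (f v) (f' v'),
   fun f f' h v v' hvv' => H.symm _ _ (h v' v (G.symm _ _ hvv'))⟩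

/-- Multihomomorphisms between graphs. -/
def SymGraph.IsMultiHom {V W : Type} (G : SymGraph V) (H : SymGraph W) (η : V → Set W) : Prop :=
  (∀ v, (η v).Nonempty) ∧
    ∀ x y : V, G.Adj x y → ∀ x' ∈ η x, ∀ y' ∈ η y, H.Adj x' y'

/-- The Hom poset, ordered by pointwise containment. -/
def MultiHom {V W : Type} (G : SymGraph V) (H : SymGraph W) : Type :=
  {η : V → Set W // SymGraph.IsMultiHom G H η}

instance {V W : Type} (G : SymGraph V) (H : SymGraph W) : PartialOrder (MultiHom G H) :=
  Subtype.partialOrder _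

/-- The reflexive path `Iₙ` on `{0, …, n}`. -/
def pathGraph (n : ℕ) : SymGraph (Fin (n + 1)) :=
  ⟨fun i j => (i : ℕ) = j ∨ (i : ℕ) + 1 = j ∨ (j : ℕ) + 1 = i,
   fun i j h => by tauto⟩

/-- ×-homotopy of vertex maps. -/
def Homotopic {V W : Type} (G : SymGraph V) (H : SymGraph W) (f g : V → W) : Prop :=
  ∃ n : ℕ, 1 ≤ n ∧ ∃ F : V × Fin (n + 1) → W,
    (G.prod (pathGraph n)).IsHom H F ∧
    (∀ v, F (v, 0) = f v) ∧ (∀ v, F (v, Fin.last n) = g v)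

/-- The singleton-valued multihomomorphism associated to a graph homomorphism. -/
def singletonMH {V W : Type} {G : SymGraph V} {H : SymGraph W} (f : V → W)
    (hf : G.IsHom H f) : MultiHom G H :=
  ⟨fun v => {f v},
   ⟨fun v => ⟨f v, rfl⟩, fun x y hxy x' hx' y' hy' => by
      simp only [Set.mem_singleton_iff] at hx' hy'
      subst hx'; subst hy'; exact hf _ _ hxy⟩⟩

/-- Disjoint union (coproduct) of graphs. -/
def SymGraph.coprod {V W : Type} (G : SymGraph V) (H : SymGraph W) : SymGraph (V ⊕ W) :=
  ⟨Sum.LiftRel G.Adj H.Adj,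
   fun u v h => by
    cases h with
    | inl h => exact Sum.LiftRel.inl (G.symm _ _ h)
    | inr h => exact Sum.LiftRel.inr (H.symm _ _ h)⟩

/-- The induced subgraph obtained by deleting the vertex `v`. -/
def SymGraph.deleteVert {V : Type} (G : SymGraph V) (v : V) : SymGraph {x : V // x ≠ v} :=
  ⟨fun a b => G.Adj a.1 b.1, fun a b h => G.symm _ _ h⟩

/-- The cartesian (box) product of graphs. -/
def SymGraph.box {V W : Type} (G : SymGraph V) (H : SymGraph W) : SymGraph (V × W) :=
  ⟨fun p q => (G.Adj p.1 q.1 ∧ p.2 = q.2) ∨ (p.1 = q.1 ∧ H.Adj p.2 q.2),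
   fun p q h => by
    rcases h with ⟨h1, h2⟩ | ⟨h1, h2⟩
    · exact Or.inl ⟨G.symm _ _ h1, h2.symm⟩
    · exact Or.inr ⟨h1.symm, H.symm _ _ h2⟩⟩

/-- The cartesian exponential graph: vertices are the graph homomorphisms. -/
def SymGraph.cartExp {V W : Type} (G : SymGraph V) (H : SymGraph W) :
    SymGraph {f : V → W // G.IsHom H f} :=
  ⟨fun f f' => ∀ b, H.Adj (f.1 b) (f'.1 b), fun f f' h b => H.symm _ _ (h b)⟩

/-- A ×-homotopy equivalence of graphs. -/
def HtpyEquiv {V W : Type} (G : SymGraph V) (H : SymGraph W) (f : V → W) : Prop :=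
  G.IsHom H f ∧ ∃ g : W → V, H.IsHom G g ∧
    Homotopic G G (g ∘ f) id ∧ Homotopic H H (f ∘ g) id

/-- The one-point looped graph. -/
def oneGraph : SymGraph Unit := ⟨fun _ _ => True, fun _ _ _ => trivial⟩

section Aux

variable {V W : Type}

/-- One elementary homotopy step between vertex maps. -/
def HStep (G : SymGraph V) (H : SymGraph W) (a b : V → W) : Prop :=
  G.IsHom H a ∧ G.IsHom H b ∧ ∀ v v' : V, G.Adj v v' → H.Adj (a v) (b v')

lemma homotopic_refl' (G : SymGraph V) (H : SymGraph W) {f : V → W} (hf : G.IsHom H f) :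
    Homotopic G H f f := by
  refine ⟨1, le_refl 1, fun p => f p.1, ?_, fun v => rfl, fun v => rfl⟩
  rintro ⟨v, i⟩ ⟨v', j⟩ ⟨h1, _⟩
  exact hf _ _ h1

lemma homotopic_extend {G : SymGraph V} {H : SymGraph W} {f b c : V → W}
    (hfb : Homotopic G H f b) (hbc : HStep G H b c) : Homotopic G H f c := by
  obtain ⟨n, hn, F, hF, hF0, hFn⟩ := hfb
  refine ⟨n + 1, by omega,
    fun p => if h : (p.2 : ℕ) ≤ n then F (p.1, ⟨p.2, by omega⟩) else c p.1, ?_, ?_, ?_⟩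
  · rintro ⟨v, i⟩ ⟨v', j⟩ ⟨h1, h2⟩
    simp only [pathGraph] at h2
    by_cases hi : (i : ℕ) ≤ n <;> by_cases hj : (j : ℕ) ≤ n <;>
      simp only [dif_pos, dif_neg, hi, hj, dite_true, dite_false]
    · refine hF (v, ⟨i, by omega⟩) (v', ⟨j, by omega⟩) ⟨h1, ?_⟩
      simp only [pathGraph]
      exact h2
    · have hi' : (i : ℕ) = n := by omega
      have hb : F (v, ⟨(i : ℕ), by omega⟩) = b v := by
        have e : (⟨(i : ℕ), by omega⟩ : Fin (n + 1)) = Fin.last n := by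
          ext; simp [hi']
        rw [e]; exact hFn v
      rw [hb]
      exact hbc.2.2 v v' h1
    · have hj' : (j : ℕ) = n := by omega
      have hb : F (v', ⟨(j : ℕ), by omega⟩) = b v' := by
        have e : (⟨(j : ℕ), by omega⟩ : Fin (n + 1)) = Fin.last n := by
          ext; simp [hj']
        rw [e]; exact hFn v'
      rw [hb]
      exact H.symm _ _ (hbc.2.2 v' v (G.symm _ _ h1))
    · exact hbc.2.1 v v' h1
  · intro v
    have h0 : ((0 : Fin (n + 2)) : ℕ) ≤ n := by simp
    simp only [dif_pos h0]
    have e : (⟨((0 : Fin (n + 2)) : ℕ), by omega⟩ : Fin (n + 1)) = 0 := by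
      ext; simp
    rw [e]; exact hF0 v
  · intro v
    have hL : ¬ ((Fin.last (n + 1) : Fin (n + 2)) : ℕ) ≤ n := by simp
    simp only [dif_neg hL]

lemma le_sub {G : SymGraph V} {H : SymGraph W} {η θ : MultiHom G H} (h : η ≤ θ) :
    ∀ v, η.1 v ⊆ θ.1 v := fun v => h v

lemma comp_hstep {G : SymGraph V} {H : SymGraph W} {η θ : MultiHom G H}
    (h : η ≤ θ ∨ θ ≤ η) {a b : V → W} (ha : ∀ v, a v ∈ η.1 v) (hb : ∀ v, b v ∈ θ.1 v) :
    HStep G H a b := by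
  rcases h with h | h
  · have ha' : ∀ v, a v ∈ θ.1 v := fun v => le_sub h v (ha v)
    exact ⟨fun u v huv => θ.2.2 u v huv _ (ha' u) _ (ha' v),
      fun u v huv => θ.2.2 u v huv _ (hb u) _ (hb v),
      fun u v huv => θ.2.2 u v huv _ (ha' u) _ (hb v)⟩
  · have hb' : ∀ v, b v ∈ η.1 v := fun v => le_sub h v (hb v)
    exact ⟨fun u v huv => η.2.2 u v huv _ (ha u) _ (ha v),
      fun u v huv => η.2.2 u v huv _ (hb' u) _ (hb' v),
      fun u v huv => η.2.2 u v huv _ (ha u) _ (hb' v)⟩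

/-- A choice function for a multihomomorphism. -/
noncomputable def mhChoice {G : SymGraph V} {H : SymGraph W} (η : MultiHom G H) : V → W :=
  fun v => (η.2.1 v).choose

lemma mhChoice_mem {G : SymGraph V} {H : SymGraph W} (η : MultiHom G H) (v : V) :
    mhChoice η v ∈ η.1 v := (η.2.1 v).choose_spec

end Aux

/-- ×-homotopy coincides with connectedness in the Hom poset. -/
theorem stmt_13 {V W : Type} (G : SymGraph V) (H : SymGraph W) (f g : V → W)
    (hf : G.IsHom H f) (hg : G.IsHom H g) :
    Homotopic G H f g ↔
      Relation.ReflTransGen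
        (fun a b : MultiHom G H => a ≤ b ∨ b ≤ a)
        (singletonMH f hf) (singletonMH g hg) := by
  constructor
  · rintro ⟨n, hn, F, hF, hF0, hFn⟩
    -- the intermediate maps
    set f' : ℕ → V → W := fun i v => F (v, ⟨min i n, by omega⟩) with hf'
    have hom_f' : ∀ i, G.IsHom H (f' i) := by
      intro i u v huv
      exact hF (u, ⟨min i n, by omega⟩) (v, ⟨min i n, by omega⟩) ⟨huv, Or.inl rfl⟩
    -- the connecting multihomomorphisms
    have hmh : ∀ i, SymGraph.IsMultiHom G H
        (fun v => {f' i v, f' (i + 1) v}) := by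
      intro i
      constructor
      · intro v; exact ⟨f' i v, Or.inl rfl⟩
      · intro x y hxy x' hx' y' hy'
        have key : ∀ a b : ℕ, (ha : a ≤ n) → (hb : b ≤ n) →
            (a = b ∨ a + 1 = b ∨ b + 1 = a) →
            H.Adj (F (x, ⟨a, by omega⟩)) (F (y, ⟨b, by omega⟩)) := by
          intro a b ha hb hab
          refine hF (x, ⟨a, by omega⟩) (y, ⟨b, by omega⟩) ⟨hxy, ?_⟩
          simp only [pathGraph]
          exact hab
        rcases hx' with rfl | rfl <;> rcases hy' with rfl | rfl <;>
          exact key _ _ (by omega) (by omega) (by omega)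
    have chain : ∀ i, Relation.ReflTransGen
        (fun a b : MultiHom G H => a ≤ b ∨ b ≤ a)
        (singletonMH (f' 0) (hom_f' 0)) (singletonMH (f' i) (hom_f' i)) := by
      intro i
      induction i with
      | zero => exact Relation.ReflTransGen.refl
      | succ i ih =>
        refine Relation.ReflTransGen.tail (b := ⟨fun v => {f' i v, f' (i + 1) v}, hmh i⟩)
          (Relation.ReflTransGen.tail (b := singletonMH (f' i) (hom_f' i)) ih (Or.inl ?_))
          (Or.inr ?_)
        · intro v w hw
          simp only [singletonMH, Set.mem_singleton_iff] at hw
          exact Or.inl hw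
        · intro v w hw
          simp only [singletonMH, Set.mem_singleton_iff] at hw
          exact Or.inr hw
    have e0 : singletonMH (f' 0) (hom_f' 0) = singletonMH f hf := by
      apply Subtype.ext
      funext v
      have : f' 0 v = f v := by
        have : (⟨min 0 n, by omega⟩ : Fin (n + 1)) = 0 := by ext; simp
        simp only [hf', this]; exact hF0 v
      simp [singletonMH, this]
    have en : singletonMH (f' n) (hom_f' n) = singletonMH g hg := by
      apply Subtype.ext
      funext v
      have : f' n v = g v := by
        have : (⟨min n n, by omega⟩ : Fin (n + 1)) = Fin.last n := by ext; simp
        simp only [hf', this]; exact hFn v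
      simp [singletonMH, this]
    have := chain n
    rwa [e0, en] at this
  · intro h
    -- generalize the right endpoint
    have key : ∀ θ : MultiHom G H,
        Relation.ReflTransGen (fun a b : MultiHom G H => a ≤ b ∨ b ≤ a)
          (singletonMH f hf) θ →
        ∀ c : V → W, (∀ v, c v ∈ θ.1 v) → Homotopic G H f c := by
      intro θ hθ
      induction hθ with
      | refl =>
        intro c hc
        have : c = f := by
          funext v
          exact hc v
        rw [this]
        exact homotopic_refl' G H hf
      | tail hab hstep ih =>
        intro c hc
        rename_i η θ'
        have hb := ih (mhChoice η) (mhChoice_mem η)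
        exact homotopic_extend hb (comp_hstep hstep (mhChoice_mem η) hc)
    exact key _ h g (fun v => rfl)
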